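/- For any n×n correlation matrix C (n ≥ 2), one has c² + σ² ≤ 1, where c is the mean and σ the standard deviation of the off-diagonal entries. -/

import Mathlib

lemma entry_sq_le_one {n : ℕ} (C : Matrix (Fin n) (Fin n) ℝ)
    (hpsd : C.PosSemidef) (hdiag : ∀ i, C i i = 1) (i j : Fin n) (hij : i ≠ j) :
    C i j ^ 2 ≤ 1 := by
  have hsym : C j i = C i j := by
    have h := congrFun (congrFun hpsd.1.symm j) i
    simpa [Matrix.conjTranspose_apply] using h
  have quad : ∀ ε : ℝ, 0 ≤ 1 + ε^2 + (ε + ε) * C i j := by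
    intro ε
    have h := hpsd.dotProduct_mulVec_nonneg (Pi.single i 1 + Pi.single j ε)
    have hst : star ((Pi.single i 1 + Pi.single j ε : Fin n → ℝ)) = Pi.single i 1 + Pi.single j ε := by
      funext k; simp
    rw [hst] at h
    simp only [Matrix.mulVec_add, Matrix.mulVec_single, dotProduct_add,
      add_dotProduct, single_dotProduct] at h
    simp at h
    rw [hdiag i, hdiag j, hsym] at h
    nlinarith [h]
  have h1 := quad 1
  have h2 := quad (-1)
  nlinarith

/-- For an n×n correlation matrix, `c² + σ² = (2/(n(n-1)))·Σ_{i>j} C_{ij}² ≤ 1`. -/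
theorem stmt_4 (n : ℕ) (hn : 2 ≤ n) (C : Matrix (Fin n) (Fin n) ℝ)
    (hpsd : C.PosSemidef) (hdiag : ∀ i, C i i = 1) :
    (2 / ((n : ℝ) * ((n : ℝ) - 1))) *
        ∑ i : Fin n, ∑ j ∈ Finset.univ.filter (fun j => j < i), C i j ^ 2 ≤ 1 := by
  have hent : ∀ i j : Fin n, i ≠ j → C i j ^ 2 ≤ 1 :=
    fun i j h => entry_sq_le_one C hpsd hdiag i j h
  have hfil : ∀ i : Fin n, Finset.univ.filter (fun j => j < i) = Finset.Iio i := by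
    intro i; ext j; simp
  have hS : ∑ i : Fin n, ∑ j ∈ Finset.univ.filter (fun j => j < i), C i j ^ 2
      ≤ (n : ℝ) * ((n : ℝ) - 1) / 2 := by
    calc ∑ i : Fin n, ∑ j ∈ Finset.univ.filter (fun j => j < i), C i j ^ 2
        ≤ ∑ i : Fin n, ∑ j ∈ Finset.univ.filter (fun j => j < i), (1:ℝ) := by
          apply Finset.sum_le_sum
          intro i _
          apply Finset.sum_le_sum
          intro j hj
          simp only [Finset.mem_filter] at hj
          exact hent i j (ne_of_gt hj.2)
      _ = ∑ i : Fin n, ((i : ℕ) : ℝ) := by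
          apply Finset.sum_congr rfl
          intro i _
          rw [hfil, Finset.sum_const, Fin.card_Iio, nsmul_eq_mul, mul_one]
      _ = (n : ℝ) * ((n : ℝ) - 1) / 2 := by
          rw [Fin.sum_univ_eq_sum_range (fun k => ((k:ℕ):ℝ)), ← Nat.cast_sum,
            Finset.sum_range_id]
          have hd : 2 ∣ n * (n - 1) := by
            rcases Nat.even_or_odd n with h | h
            · exact Dvd.dvd.mul_right h.two_dvd _
            · exact Dvd.dvd.mul_left (Nat.Odd.sub_odd h odd_one).two_dvd _
          rw [Nat.cast_div hd (by norm_num)]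
          push_cast [Nat.cast_sub (by omega : 1 ≤ n)]
          ring
  have hpos : 0 < (n : ℝ) * ((n : ℝ) - 1) := by
    have : (2:ℝ) ≤ n := by exact_mod_cast hn
    nlinarith
  rw [div_mul_eq_mul_div, div_le_one hpos]
  linarith
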